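/- Let H be a finite-dimensional Hilbert space with dim H ≥ 2 and μ a quantum probability measure given by μ(A) = tr(Π_A T) with T positive semidefinite of trace 1. Suppose there exist unit vectors u₁, …, uₙ spanning H such that μ(span uᵢ) is the same value c for all i and c ≤ μ(span x) for every unit vector x. Then T = (1/dim H)·I, i.e., μ is the uniform measure μ(A) = dim A / dim H. -/

import Mathlib

open scoped InnerProductSpace

noncomputable def proj {H : Type*} [NormedAddCommGroup H] [InnerProductSpace ℂ H]
    [FiniteDimensional ℂ H] (A : Submodule ℂ H) : H →ₗ[ℂ] H :=
  (A.subtypeL.comp A.orthogonalProjection).toLinearMap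

noncomputable def mu {H : Type*} [NormedAddCommGroup H] [InnerProductSpace ℂ H]
    [FiniteDimensional ℂ H] (T : H →ₗ[ℂ] H) (A : Submodule ℂ H) : ℝ :=
  RCLike.re (LinearMap.trace ℂ H ((proj A) ∘ₗ T))

lemma trace_inner {H : Type*} [NormedAddCommGroup H] [InnerProductSpace ℂ H]
    [FiniteDimensional ℂ H] {ι : Type*} [Fintype ι] [DecidableEq ι]
    (b : OrthonormalBasis ι ℂ H) (f : H →ₗ[ℂ] H) :
    LinearMap.trace ℂ H f = ∑ i, (inner ℂ (b i) (f (b i)) : ℂ) := by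
  rw [LinearMap.trace_eq_matrix_trace ℂ b.toBasis f, Matrix.trace]
  congr 1
  ext i
  rw [Matrix.diag_apply, LinearMap.toMatrix_apply, b.coe_toBasis, b.coe_toBasis_repr_apply,
    b.repr_apply_apply]

lemma trace_proj_comp {H : Type*} [NormedAddCommGroup H] [InnerProductSpace ℂ H]
    [FiniteDimensional ℂ H] (T : H →ₗ[ℂ] H) (hsym : T.IsSymmetric) (x : H) (hx : ‖x‖ = 1) :
    LinearMap.trace ℂ H ((proj (Submodule.span ℂ {x})) ∘ₗ T) = (inner ℂ (T x) x : ℂ) := by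
  let b := stdOrthonormalBasis ℂ H
  rw [trace_inner b]
  have h1 : ∀ i, (inner ℂ (b i) ((proj (Submodule.span ℂ {x}) ∘ₗ T) (b i)) : ℂ)
      = inner ℂ ((T x)) (b i) * inner ℂ (b i) x := by
    intro i
    have h0 : (proj (Submodule.span ℂ {x}) ∘ₗ T) (b i)
        = ((inner ℂ x (T (b i)) : ℂ) / ((‖x‖ : ℝ) ^ 2 : ℝ)) • x := by
      simp only [proj, LinearMap.comp_apply, ContinuousLinearMap.coe_coe,
        ContinuousLinearMap.comp_apply, Submodule.subtypeL_apply]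
      rw [← Submodule.starProjection_apply, Submodule.starProjection_singleton]
      norm_cast
    rw [h0, inner_smul_right, hx, hsym x (b i)]
    norm_num
  rw [Finset.sum_congr rfl (fun i _ => h1 i)]
  exact b.sum_inner_mul_inner (T x) x

lemma quad_zero (a b : ℝ) (ha : 0 ≤ a) (h : ∀ t : ℝ, 0 ≤ a * t ^ 2 + 2 * b * t) : b = 0 := by
  by_contra hb
  have h1 := h (-b / (a + 1))
  have hpos : (0:ℝ) < a + 1 := by linarith
  have hb2 : 0 < b ^ 2 := by positivity
  have h2 : a * (-b/(a+1))^2 + 2*b*(-b/(a+1)) = (a*b^2 - 2*b^2*(a+1))/(a+1)^2 := by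
    field_simp; ring
  rw [h2, le_div_iff₀ (by positivity)] at h1
  nlinarith

/-- if a spanning family of unit vectors all have the same,
minimal, measure, then the quantum probability is uniform. -/
theorem stmt12 {H : Type*} [NormedAddCommGroup H] [InnerProductSpace ℂ H]
    [FiniteDimensional ℂ H] (hdim : 2 ≤ Module.finrank ℂ H)
    (T : H →ₗ[ℂ] H)
    (hsym : T.IsSymmetric)
    (hpos : ∀ x : H, 0 ≤ RCLike.re (inner ℂ (T x) x : ℂ))
    (htr : LinearMap.trace ℂ H T = 1)
    (n : ℕ) (u : Fin n → H) (hu : ∀ i, ‖u i‖ = 1)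
    (hspan : Submodule.span ℂ (Set.range u) = ⊤)
    (c : ℝ) (hc : ∀ i, mu T (Submodule.span ℂ {u i}) = c)
    (hmin : ∀ x : H, ‖x‖ = 1 → c ≤ mu T (Submodule.span ℂ {x})) :
    T = ((Module.finrank ℂ H : ℂ))⁻¹ • LinearMap.id ∧
    ∀ A : Submodule ℂ H,
      mu T A = (Module.finrank ℂ A : ℝ) / (Module.finrank ℂ H : ℝ) := by
  set S : H →ₗ[ℂ] H := T - (c : ℂ) • LinearMap.id with hS
  have hSsym : S.IsSymmetric := by
    intro x y
    simp only [hS, LinearMap.sub_apply, LinearMap.smul_apply, LinearMap.id_apply,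
      inner_sub_left, inner_sub_right, inner_smul_left, inner_smul_right, hsym x y]
    rw [Complex.conj_ofReal]
  have hSre : ∀ x : H, RCLike.re (inner ℂ (S x) x : ℂ)
      = RCLike.re (inner ℂ (T x) x : ℂ) - c * ‖x‖ ^ 2 := by
    intro x
    have h3 : (inner ℂ (S x) x : ℂ) = inner ℂ (T x) x - (c:ℂ) * inner ℂ x x := by
      simp only [hS, LinearMap.sub_apply, LinearMap.smul_apply, LinearMap.id_apply,
        inner_sub_left, inner_smul_left, Complex.conj_ofReal]
    rw [h3, map_sub]
    have h4 : RCLike.re ((c:ℂ) * (inner ℂ x x : ℂ)) = c * ‖x‖^2 := by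
      rw [RCLike.re_to_complex, Complex.re_ofReal_mul, ← RCLike.re_to_complex,
        inner_self_eq_norm_sq]
    rw [h4]
  have hmu : ∀ x : H, ‖x‖ = 1 → mu T (Submodule.span ℂ {x}) = RCLike.re (inner ℂ (T x) x : ℂ) := by
    intro x hx
    rw [mu, trace_proj_comp T hsym x hx]
  have hSpos : ∀ x : H, 0 ≤ RCLike.re (inner ℂ (S x) x : ℂ) := by
    intro x
    rcases eq_or_ne x 0 with rfl | hx0
    · simp
    · have hn : (0:ℝ) < ‖x‖ := norm_pos_iff.mpr hx0
      set y := ((‖x‖⁻¹ : ℝ) : ℂ) • x with hy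
      have hyn : ‖y‖ = 1 := by
        rw [hy, norm_smul]
        simp [norm_inv, inv_mul_cancel₀ hn.ne']
      have h1 := hmin y hyn
      rw [hmu y hyn] at h1
      have h2 : RCLike.re (inner ℂ (T y) y : ℂ) = (‖x‖^2)⁻¹ * RCLike.re (inner ℂ (T x) x : ℂ) := by
        have h2' : (inner ℂ (T y) y : ℂ) = (((‖x‖^2)⁻¹ : ℝ) : ℂ) * inner ℂ (T x) x := by
          rw [hy]
          simp only [map_smul, inner_smul_left, inner_smul_right, smul_eq_mul,
            Complex.conj_ofReal]
          push_cast
          ring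
        rw [h2', RCLike.re_to_complex, Complex.re_ofReal_mul, RCLike.re_to_complex]
      rw [h2] at h1
      rw [hSre]
      have := mul_le_mul_of_nonneg_left h1 (le_of_lt (pow_pos hn 2))
      rw [mul_inv_cancel_left₀ (by positivity)] at this
      linarith
  have hSu : ∀ i, S (u i) = 0 := by
    intro i
    have hre : RCLike.re (inner ℂ (S (u i)) (u i) : ℂ) = 0 := by
      have h1 := hc i
      rw [hmu (u i) (hu i)] at h1
      rw [hSre, h1, hu i]
      ring
    have key : ∀ y : H, RCLike.re (inner ℂ (S (u i)) y : ℂ) = 0 := by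
      intro y
      apply quad_zero _ _ (hSpos y)
      intro t
      have h := hSpos (u i + (t : ℂ) • y)
      have expand : (inner ℂ (S (u i + (t:ℂ) • y)) (u i + (t:ℂ) • y) : ℂ)
          = inner ℂ (S (u i)) (u i) + (t:ℂ) * inner ℂ (S (u i)) y
            + (t:ℂ) * inner ℂ (S y) (u i) + (t:ℂ) * ((t:ℂ) * inner ℂ (S y) y) := by
        simp only [map_add, map_smul, inner_add_left, inner_add_right, inner_smul_left,
          inner_smul_right, Complex.conj_ofReal, smul_eq_mul]
        ring
      rw [expand] at h
      have hsy : RCLike.re (inner ℂ (S y) (u i) : ℂ) = RCLike.re (inner ℂ (S (u i)) y : ℂ) := by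
        have h2 : (inner ℂ (S y) (u i) : ℂ) = starRingEnd ℂ (inner ℂ (S (u i)) y : ℂ) := by
          rw [hSsym y (u i), inner_conj_symm]
        rw [h2, RCLike.conj_re]
      simp only [map_add, RCLike.re_to_complex, Complex.re_ofReal_mul] at h
      simp only [RCLike.re_to_complex] at hsy hre ⊢
      rw [hre, hsy] at h
      nlinarith [h]
    have h5 := key (S (u i))
    rw [inner_self_eq_norm_sq (𝕜 := ℂ)] at h5
    have : ‖S (u i)‖ = 0 := by nlinarith [norm_nonneg (S (u i))]
    exact norm_eq_zero.mp this
  have hSzero : S = 0 := by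
    apply LinearMap.ext_on (R := ℂ) hspan
    rintro x ⟨i, rfl⟩
    simp [hSu i]
  have hTc : T = (c : ℂ) • LinearMap.id := by
    exact sub_eq_zero.mp hSzero
  have hfr0 : 0 < Module.finrank ℂ H := lt_of_lt_of_le (by norm_num) hdim
  have hfrC : (Module.finrank ℂ H : ℂ) ≠ 0 := Nat.cast_ne_zero.mpr hfr0.ne'
  have hcval : (c : ℂ) = ((Module.finrank ℂ H : ℂ))⁻¹ := by
    have h1 := htr
    rw [hTc, map_smul, LinearMap.trace_id, smul_eq_mul] at h1
    field_simp
    linear_combination h1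
  have hcreal : c = ((Module.finrank ℂ H : ℝ))⁻¹ := by
    have : ((c : ℂ)) = (((Module.finrank ℂ H : ℝ))⁻¹ : ℂ) := by
      rw [hcval]; push_cast; ring
    exact_mod_cast this
  constructor
  · rw [hTc, hcval]
  · intro A
    have hproj : LinearMap.IsProj A (proj A) := by
      constructor
      · intro x
        exact (A.orthogonalProjection x).2
      · intro x hx
        simp only [proj, LinearMap.comp_apply, ContinuousLinearMap.coe_coe,
          ContinuousLinearMap.comp_apply, Submodule.subtypeL_apply,
          ContinuousLinearMap.coe_comp']
        rw [← Submodule.starProjection_apply]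
        exact Submodule.starProjection_eq_self_iff.mpr hx
    have htrp : LinearMap.trace ℂ H (proj A) = (Module.finrank ℂ A : ℂ) :=
      hproj.trace
    have hcomp : (proj A) ∘ₗ T = (c : ℂ) • proj A := by
      rw [hTc]
      ext x
      simp
    rw [mu, hcomp, map_smul, htrp, smul_eq_mul, RCLike.re_to_complex,
      Complex.re_ofReal_mul, hcreal, Complex.natCast_re]
    rw [inv_mul_eq_div]
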